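/- arXiv:1407.1597 — 3 statements merged into one kernel-verified Lean document; each statement's English description precedes it below -/
import Mathlib

section
/- Let θ ∈ (-π/2, π/2), β > 0 and φ ∈ ℝ. Then the function x ↦ x^{β-1} e^{-x cos θ} cos(x sin θ + φ) is Lebesgue integrable on (0, ∞) and ∫₀^∞ x^{β-1} e^{-x cos θ} cos(x sin θ + φ) dx = Γ(β) cos(βθ + φ). -/
open MeasureTheory Real

-- Lemma A
lemma aux_real_int {β b : ℝ} (hβ : 0 < β) (hb : 0 < b) :
    IntegrableOn (fun t : ℝ => t ^ (β - 1) * Real.exp (-(b * t))) (Set.Ioi 0) := by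
  have h0 : IntegrableOn (fun x : ℝ => Real.exp (-x) * x ^ (β - 1)) (Set.Ioi 0) :=
    Real.GammaIntegral_convergent hβ
  have h1 : IntegrableOn (fun x : ℝ => Real.exp (-(b * x)) * (b * x) ^ (β - 1)) (Set.Ioi 0) := by
    have := (integrableOn_Ioi_comp_mul_left_iff
      (fun x : ℝ => Real.exp (-x) * x ^ (β - 1)) 0 hb).mpr (by simpa using h0)
    simpa using this
  have h2 := h1.const_mul (b ^ (1 - β))
  refine IntegrableOn.congr_fun h2 (fun x hx => ?_) measurableSet_Ioi
  have hx0 : (0:ℝ) < x := hx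
  rw [Real.mul_rpow hb.le hx0.le]
  rw [show b ^ (1-β) * (Real.exp (-(b*x)) * (b ^ (β-1) * x ^ (β-1)))
      = (b ^ (1-β) * b ^ (β-1)) * (x ^ (β-1) * Real.exp (-(b*x))) by ring,
    ← Real.rpow_add hb]
  simp

-- Lemma B: complex integrability
lemma aux_cpx_int {β : ℝ} (hβ : 0 < β) {z : ℂ} (hz : 0 < z.re) :
    IntegrableOn (fun t : ℝ => (t : ℂ) ^ ((β : ℂ) - 1) * Complex.exp (-(z * t))) (Set.Ioi 0) := by
  constructor
  · refine ContinuousOn.aestronglyMeasurable ?_ measurableSet_Ioi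
    apply ContinuousOn.mul
    · apply continuousOn_of_forall_continuousAt
      intro x hx
      exact (continuousAt_cpow_const <| Complex.ofReal_mem_slitPlane.2 hx).comp
        Complex.continuous_ofReal.continuousAt
    · exact (Complex.continuous_exp.comp
        ((continuous_const.mul Complex.continuous_ofReal).neg)).continuousOn
  · rw [← hasFiniteIntegral_norm_iff]
    refine HasFiniteIntegral.congr (aux_real_int hβ hz).2 ?_
    apply (ae_restrict_iff' measurableSet_Ioi).mpr
    filter_upwards with x hx
    rw [norm_mul,
      Complex.norm_cpow_eq_rpow_re_of_pos hx, Complex.norm_exp]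
    simp [Complex.sub_re]

lemma aux_cont (β : ℝ) (z : ℂ) :
    ContinuousOn (fun t : ℝ => (t : ℂ) ^ ((β : ℂ) - 1) * Complex.exp (-(z * t))) (Set.Ioi 0) := by
  apply ContinuousOn.mul
  · apply continuousOn_of_forall_continuousAt
    intro x hx
    exact (continuousAt_cpow_const <| Complex.ofReal_mem_slitPlane.2 hx).comp
      Complex.continuous_ofReal.continuousAt
  · exact (Complex.continuous_exp.comp
      ((continuous_const.mul Complex.continuous_ofReal).neg)).continuousOn

noncomputable def Fz (β : ℝ) (z : ℂ) : ℂ :=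
  ∫ t in Set.Ioi (0:ℝ), (t : ℂ) ^ ((β : ℂ) - 1) * Complex.exp (-(z * t))

lemma aux_diff {β : ℝ} (hβ : 0 < β) {z₀ : ℂ} (hz : 0 < z₀.re) :
    DifferentiableAt ℂ (Fz β) z₀ := by
  set ε := z₀.re / 2 with hε
  have hε0 : 0 < ε := by positivity
  have hre : ∀ z ∈ Metric.ball z₀ ε, ε < z.re := by
    intro z hz'
    have : |z.re - z₀.re| ≤ dist z z₀ := by
      simpa [dist_eq_norm] using Complex.abs_re_le_norm (z - z₀)
    have h2 := (abs_lt.mp (lt_of_le_of_lt this hz')).1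
    simp only [hε] at *
    linarith
  have key := hasDerivAt_integral_of_dominated_loc_of_deriv_le (μ := volume.restrict (Set.Ioi 0))
    (F := fun z t => (t : ℂ) ^ ((β : ℂ) - 1) * Complex.exp (-(z * t)))
    (F' := fun z (t : ℝ) => (t : ℂ) ^ ((β : ℂ) - 1) * (Complex.exp (-(z * t)) * (-(t:ℂ))))
    (x₀ := z₀)
    (bound := fun t : ℝ => t ^ ((β + 1) - 1) * Real.exp (-(ε * t)))
    (Metric.ball_mem_nhds z₀ hε0) ?_ ?_ ?_ ?_ ?_ ?_
  · exact key.2.differentiableAt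
  · filter_upwards with z using (aux_cont β z).aestronglyMeasurable measurableSet_Ioi
  · exact aux_cpx_int hβ hz
  · exact (((aux_cont β z₀).mul (Complex.continuous_ofReal.continuousOn.neg)).aestronglyMeasurable
      measurableSet_Ioi).congr (by
        filter_upwards with t
        simp only [Pi.neg_apply, Pi.mul_apply]
        ring)
  · apply (ae_restrict_iff' measurableSet_Ioi).mpr
    filter_upwards with t ht
    intro z hzb
    have hzre := hre z hzb
    rw [norm_mul, norm_mul,
      Complex.norm_cpow_eq_rpow_re_of_pos ht, Complex.norm_exp, norm_neg,
      Complex.norm_of_nonneg ht.le]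
    simp only [Complex.sub_re, Complex.ofReal_re, Complex.one_re, Complex.neg_re,
      Complex.mul_re, Complex.ofReal_im, add_sub_cancel_right]
    have h1 : t ^ (β - 1) * (Real.exp (-(z.re * t - z.im * 0)) * t)
        = t ^ ((β+1) - 1) * Real.exp (-(z.re * t)) := by
      rw [show (β+1)-1 = (β-1) + 1 by ring, Real.rpow_add ht, Real.rpow_one]
      ring_nf
    rw [h1]
    have : Real.exp (-(z.re * t)) ≤ Real.exp (-(ε * t)) := by
      apply Real.exp_le_exp.mpr
      have := mul_le_mul_of_nonneg_right hzre.le ht.le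
      linarith
    have ht' : 0 ≤ t ^ ((β+1)-1) := Real.rpow_nonneg ht.le _
    calc t ^ ((β+1)-1) * Real.exp (-(z.re * t)) ≤ t ^ ((β+1)-1) * Real.exp (-(ε * t)) :=
          mul_le_mul_of_nonneg_left this ht'
      _ = t ^ β * Real.exp (-(ε * t)) := by rw [add_sub_cancel_right]
  · exact aux_real_int (by linarith) hε0
  · apply (ae_restrict_iff' measurableSet_Ioi).mpr
    filter_upwards with t ht
    intro z hzb
    have h1 : HasDerivAt (fun z : ℂ => -(z * (t:ℂ))) (-(t:ℂ)) z :=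
      (hasDerivAt_mul_const (t:ℂ)).neg
    have h2 := h1.cexp
    exact h2.const_mul _

lemma aux_real_eq {β : ℝ} (hβ : 0 < β) {r : ℝ} (hr : 0 < r) :
    Fz β (r : ℂ) = (Real.Gamma β : ℂ) * (r : ℂ) ^ (-(β : ℂ)) := by
  have h := Complex.integral_cpow_mul_exp_neg_mul_Ioi
    (a := (β : ℂ)) (r := r) (by simpa using hβ) hr
  have harg : Complex.arg (r : ℂ) ≠ π := by
    rw [Complex.arg_ofReal_of_nonneg hr.le]
    exact Real.pi_pos.ne
  rw [Fz]
  rw [h, one_div, Complex.inv_cpow _ _ harg, ← Complex.cpow_neg, Complex.Gamma_ofReal]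
  ring

lemma aux_eqOn {β : ℝ} (hβ : 0 < β) :
    Set.EqOn (Fz β) (fun z => (Real.Gamma β : ℂ) * z ^ (-(β : ℂ))) {z : ℂ | 0 < z.re} := by
  have hU : IsOpen {z : ℂ | 0 < z.re} := isOpen_lt continuous_const Complex.continuous_re
  have hf : AnalyticOnNhd ℂ (Fz β) {z : ℂ | 0 < z.re} :=
    DifferentiableOn.analyticOnNhd (fun z hz => (aux_diff hβ hz).differentiableWithinAt) hU
  have hg : AnalyticOnNhd ℂ (fun z => (Real.Gamma β : ℂ) * z ^ (-(β : ℂ))) {z : ℂ | 0 < z.re} := by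
    refine DifferentiableOn.analyticOnNhd (fun z hz => ?_) hU
    exact ((differentiableAt_id.cpow (differentiableAt_const _)
      (Or.inl hz)).const_mul _).differentiableWithinAt
  have hconn : IsPreconnected {z : ℂ | 0 < z.re} := (convex_halfSpace_re_gt 0).isPreconnected
  have h1 : (1 : ℂ) ∈ {z : ℂ | 0 < z.re} := by simp
  refine hf.eqOn_of_preconnected_of_frequently_eq hg hconn h1 ?_
  have htend : Filter.Tendsto (fun n : ℕ => ((1 + ((n:ℝ)+1)⁻¹ : ℝ) : ℂ)) Filter.atTop
      (nhdsWithin 1 {(1:ℂ)}ᶜ) := by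
    apply tendsto_nhdsWithin_of_tendsto_nhds_of_eventually_within
    · have h0 : Filter.Tendsto (fun n : ℕ => (1 + ((n:ℝ)+1)⁻¹ : ℝ)) Filter.atTop (nhds 1) := by
        have := tendsto_one_div_add_atTop_nhds_zero_nat (𝕜 := ℝ)
        simpa [one_div] using tendsto_const_nhds.add this
      have h2 : Filter.Tendsto (fun n : ℕ => ((1 + ((n:ℝ)+1)⁻¹ : ℝ) : ℂ)) Filter.atTop
          (nhds ((1:ℝ):ℂ)) := (Complex.continuous_ofReal.tendsto 1).comp h0
      simpa using h2
    · filter_upwards with n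
      simp only [Set.mem_compl_iff, Set.mem_singleton_iff]
      intro hc
      have : (1 + ((n:ℝ)+1)⁻¹ : ℝ) = 1 := by exact_mod_cast hc
      have hpos : (0:ℝ) < ((n:ℝ)+1)⁻¹ := by positivity
      linarith
  refine htend.frequently (Filter.Frequently.of_forall fun n => ?_)
  simpa using aux_real_eq hβ (r := 1 + ((n:ℝ)+1)⁻¹) (by positivity)

theorem stmt_6 (θ β φ : ℝ) (hθ : θ ∈ Set.Ioo (-(π / 2)) (π / 2)) (hβ : 0 < β) :
    IntegrableOn (fun x : ℝ => x ^ (β - 1) * Real.exp (-x * Real.cos θ) *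
      Real.cos (x * Real.sin θ + φ)) (Set.Ioi 0) ∧
    ∫ x in Set.Ioi (0 : ℝ), x ^ (β - 1) * Real.exp (-x * Real.cos θ) *
      Real.cos (x * Real.sin θ + φ) = Real.Gamma β * Real.cos (β * θ + φ) := by
  set z : ℂ := Complex.exp (θ * Complex.I) with hzdef
  have hzre : 0 < z.re := by
    rw [hzdef, Complex.exp_ofReal_mul_I_re]
    exact Real.cos_pos_of_mem_Ioo hθ
  set g : ℝ → ℂ := fun x =>
    Complex.exp (-(φ:ℂ) * Complex.I) * ((x:ℂ) ^ ((β:ℂ) - 1) * Complex.exp (-(z * x))) with hgdef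
  have hg_int : IntegrableOn g (Set.Ioi 0) := (aux_cpx_int hβ hzre).const_mul _
  have hpt : ∀ x ∈ Set.Ioi (0:ℝ), (g x).re =
      x ^ (β - 1) * Real.exp (-x * Real.cos θ) * Real.cos (x * Real.sin θ + φ) := by
    intro x hx
    have hx0 : (0:ℝ) < x := hx
    have h1 : g x = ((x:ℝ) ^ (β - 1) : ℝ) * Complex.exp (-(z * x) + -(φ:ℂ) * Complex.I) := by
      rw [hgdef, Complex.exp_add, Complex.ofReal_cpow hx0.le]
      push_cast
      ring
    have hzre' : z.re = Real.cos θ := by rw [hzdef, Complex.exp_ofReal_mul_I_re]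
    have hzim' : z.im = Real.sin θ := by rw [hzdef, Complex.exp_ofReal_mul_I_im]
    have hwre : (-(z * x) + -(φ:ℂ) * Complex.I).re = -x * Real.cos θ := by
      simp [Complex.mul_re, hzre']
      ring
    have hwim : (-(z * x) + -(φ:ℂ) * Complex.I).im = -(x * Real.sin θ + φ) := by
      simp [Complex.mul_im, hzim']
      ring
    rw [h1, Complex.re_ofReal_mul, Complex.exp_re, hwre, hwim, Real.cos_neg]
    ring
  constructor
  · refine IntegrableOn.congr_fun hg_int.re (fun x hx => ?_) measurableSet_Ioi
    simpa using hpt x hx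
  · have h2 : ∫ x in Set.Ioi (0:ℝ), x ^ (β - 1) * Real.exp (-x * Real.cos θ) *
        Real.cos (x * Real.sin θ + φ) = ∫ x in Set.Ioi (0:ℝ), RCLike.re (g x) := by
      refine setIntegral_congr_fun measurableSet_Ioi (fun x hx => ?_)
      simpa using (hpt x hx).symm
    rw [h2, integral_re hg_int]
    show (∫ x in Set.Ioi (0:ℝ), g x).re = _
    have h3 : ∫ x in Set.Ioi (0:ℝ), g x
        = Complex.exp (-(φ:ℂ) * Complex.I) * Fz β z := by
      rw [hgdef, Fz, MeasureTheory.integral_const_mul]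
    have h4 : Fz β z = (Real.Gamma β : ℂ) * z ^ (-(β:ℂ)) := aux_eqOn hβ hzre
    have h5 : z ^ (-(β:ℂ)) = Complex.exp (-((β * θ : ℝ) : ℂ) * Complex.I) := by
      rw [hzdef, Complex.cpow_def_of_ne_zero (Complex.exp_ne_zero _), Complex.log_exp]
      · congr 1
        push_cast
        ring
      · simp only [Complex.mul_im, Complex.ofReal_re, Complex.I_im, Complex.ofReal_im,
          Complex.I_re, mul_zero, mul_one, zero_add, add_zero]
        have := Real.pi_pos
        have h := hθ.1
        linarith
      · simp only [Complex.mul_im, Complex.ofReal_re, Complex.I_im, Complex.ofReal_im,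
          Complex.I_re, mul_zero, mul_one, zero_add, add_zero]
        have := Real.pi_pos
        have h := hθ.2
        linarith
    rw [h3, h4, h5]
    have h6 : -(φ:ℂ) * Complex.I + -((β * θ : ℝ) : ℂ) * Complex.I
        = ((-(β * θ + φ) : ℝ) : ℂ) * Complex.I := by push_cast; ring
    rw [show Complex.exp (-(φ:ℂ) * Complex.I) * ((Real.Gamma β : ℂ) * Complex.exp (-((β * θ : ℝ) : ℂ) * Complex.I))
        = (Real.Gamma β : ℂ) * Complex.exp (-(φ:ℂ) * Complex.I + -((β * θ : ℝ) : ℂ) * Complex.I) by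
          rw [Complex.exp_add]; ring,
      h6, Complex.re_ofReal_mul, Complex.exp_ofReal_mul_I_re, Real.cos_neg]
end

section
/- Let β ∈ (0, 1), λ > 0 and c ∈ ℝ. Then the improper integral ∫₀^∞ x^{β-1} sin(c + λx) dx converges, in the sense that lim_{T→∞} ∫₀^T x^{β-1} sin(c + λx) dx exists, and its value equals Γ(β) λ^{-β} sin(c + πβ/2). -/
open MeasureTheory Real Filter
open Set Topology

lemma contOn_master {s : ℝ} :
    ContinuousOn (fun t : ℝ => t ^ (s - 1) / (1 + t)) (Ioi 0) := by
  apply ContinuousOn.div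
  · exact continuousOn_id.rpow_const fun x hx => Or.inl (ne_of_gt hx)
  · exact (continuous_const.add continuous_id).continuousOn
  · intro x hx; have : (0:ℝ) < x := hx; positivity

lemma integrableOn_master {s : ℝ} (h0 : 0 < s) (h1 : s < 1) :
    IntegrableOn (fun t : ℝ => t ^ (s - 1) / (1 + t)) (Ioi 0) := by
  rw [← Ioc_union_Ioi_eq_Ioi (zero_le_one : (0:ℝ) ≤ 1), integrableOn_union]
  constructor
  · have hint : IntegrableOn (fun t : ℝ => t ^ (s - 1)) (Ioc 0 1) := by
      have := intervalIntegral.intervalIntegrable_rpow' (a := 0) (b := 1)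
        (r := s - 1) (by linarith)
      simpa [intervalIntegrable_iff, uIoc_of_le (zero_le_one : (0:ℝ) ≤ 1)] using this
    refine hint.mono' ?_ ?_
    · exact (contOn_master.mono Ioc_subset_Ioi_self).aestronglyMeasurable measurableSet_Ioc
    · filter_upwards [self_mem_ae_restrict (measurableSet_Ioc : MeasurableSet (Ioc (0:ℝ) 1))]
        with t ht
      have ht0 : 0 < t := ht.1
      rw [norm_div, Real.norm_rpow_of_nonneg ht0.le, Real.norm_of_nonneg ht0.le,
        Real.norm_of_nonneg (by linarith : (0:ℝ) ≤ 1 + t)]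
      calc t ^ (s-1) / (1 + t) ≤ t ^ (s-1) / 1 := by
            apply div_le_div_of_nonneg_left (rpow_nonneg ht0.le _) one_pos (by linarith)
        _ = t ^ (s-1) := by ring
  · have hint : IntegrableOn (fun t : ℝ => t ^ (s - 2)) (Ioi 1) :=
      integrableOn_Ioi_rpow_of_lt (by linarith) one_pos
    refine hint.mono' ?_ ?_
    · exact (contOn_master.mono (Ioi_subset_Ioi zero_le_one)).aestronglyMeasurable measurableSet_Ioi
    · filter_upwards [self_mem_ae_restrict (measurableSet_Ioi : MeasurableSet (Ioi (1:ℝ)))]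
        with t ht
      have ht1 : (1:ℝ) < t := ht
      have ht0 : (0:ℝ) < t := by linarith
      rw [norm_div, Real.norm_rpow_of_nonneg ht0.le, Real.norm_of_nonneg ht0.le,
        Real.norm_of_nonneg (by linarith : (0:ℝ) ≤ 1 + t)]
      have : t ^ (s-2) = t ^ (s-1) / t := by
        rw [eq_div_iff ht0.ne', ← Real.rpow_add_one ht0.ne']; ring_nf
      rw [this]
      apply div_le_div_of_nonneg_left (rpow_nonneg ht0.le _) ht0 (by linarith)

lemma inner_exp_integral {b : ℝ} (hb : 0 < b) :
    ∫ x : ℝ in Ioi 0, Real.exp (-(b * x)) = b⁻¹ := by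
  have := integral_comp_mul_left_Ioi (fun y : ℝ => Real.exp (-y)) 0 hb
  simp only [mul_zero, integral_exp_neg_Ioi_zero, smul_eq_mul, mul_one] at this
  exact this

lemma exp_split (v x : ℝ) :
    Real.exp (-(1 + v) * x) = Real.exp (-x) * Real.exp (-(x * v)) := by
  rw [← Real.exp_add]; congr 1; ring

lemma inner_rpow_exp {s x : ℝ} (h0 : 0 < s) (hx0 : 0 < x) :
    ∫ v in Ioi (0:ℝ), v ^ (s - 1) * Real.exp (-(1 + v) * x)
      = Real.Gamma s * (Real.exp (-x) * x ^ (1 - s - 1)) := by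
  have h1 : ∀ v ∈ Ioi (0:ℝ), v ^ (s - 1) * Real.exp (-(1 + v) * x) =
      Real.exp (-x) * (v ^ (s - 1) * Real.exp (-(x * v))) := by
    intro v hv
    rw [exp_split]; ring
  rw [setIntegral_congr_fun measurableSet_Ioi h1, integral_const_mul,
    Real.integral_rpow_mul_exp_neg_mul_Ioi h0 hx0,
    one_div, Real.inv_rpow hx0.le, ← Real.rpow_neg hx0.le,
    show (1:ℝ) - s - 1 = -s by ring]
  ring

lemma integrableOn_rpow_exp {s x : ℝ} (h0 : 0 < s) (hx0 : 0 < x) :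
    IntegrableOn (fun v : ℝ => v ^ (s - 1) * Real.exp (-(x * v))) (Ioi 0) := by
  have := integrableOn_rpow_mul_exp_neg_mul_rpow (by linarith : (-1:ℝ) < s - 1)
    one_pos hx0
  apply this.congr_fun _ measurableSet_Ioi
  intro v hv
  simp only [Real.rpow_one, neg_mul]

lemma master_value {s : ℝ} (h0 : 0 < s) (h1 : s < 1) :
    ∫ t in Ioi 0, t ^ (s - 1) / (1 + t) = Real.Gamma s * Real.Gamma (1 - s) := by
  have hmeas : AEStronglyMeasurable (Function.uncurry fun x v : ℝ =>
      v ^ (s - 1) * Real.exp (-(1 + v) * x))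
      ((volume.restrict (Ioi (0:ℝ))).prod (volume.restrict (Ioi (0:ℝ)))) := by
    apply Measurable.aestronglyMeasurable
    fun_prop
  have key : Integrable (Function.uncurry fun x v : ℝ =>
      v ^ (s - 1) * Real.exp (-(1 + v) * x))
      ((volume.restrict (Ioi (0:ℝ))).prod (volume.restrict (Ioi (0:ℝ)))) := by
    rw [MeasureTheory.integrable_prod_iff hmeas]
    constructor
    · filter_upwards [self_mem_ae_restrict (measurableSet_Ioi : MeasurableSet (Ioi (0:ℝ)))]
        with x hx
      have heq : (fun v : ℝ => v ^ (s - 1) * Real.exp (-(1 + v) * x)) =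
          fun v : ℝ => Real.exp (-x) * (v ^ (s - 1) * Real.exp (-(x * v))) := by
        ext v; rw [exp_split]; ring
      show Integrable (fun v : ℝ => v ^ (s - 1) * Real.exp (-(1 + v) * x)) _
      rw [heq]
      exact (integrableOn_rpow_exp h0 (mem_Ioi.mp hx)).const_mul _
    · have heq : (fun x : ℝ =>
          ∫ v in Ioi (0:ℝ), ‖v ^ (s - 1) * Real.exp (-(1 + v) * x)‖)
          =ᶠ[ae (volume.restrict (Ioi (0:ℝ)))]
          fun x : ℝ => Real.Gamma s * (Real.exp (-x) * x ^ ((1 - s) - 1)) := by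
        filter_upwards [self_mem_ae_restrict (measurableSet_Ioi : MeasurableSet (Ioi (0:ℝ)))]
          with x hx
        have hx0 : (0:ℝ) < x := hx
        have h2 : ∀ v ∈ Ioi (0:ℝ), ‖v ^ (s - 1) * Real.exp (-(1 + v) * x)‖ =
            v ^ (s - 1) * Real.exp (-(1 + v) * x) := by
          intro v hv
          have hv0 : (0:ℝ) < v := hv
          rw [norm_mul, Real.norm_rpow_of_nonneg hv0.le, Real.norm_of_nonneg hv0.le,
            Real.norm_of_nonneg (Real.exp_nonneg _)]
        rw [setIntegral_congr_fun measurableSet_Ioi h2, inner_rpow_exp h0 hx0]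
      apply (integrable_congr heq).mpr
      exact ((Real.GammaIntegral_convergent (by linarith : (0:ℝ) < 1 - s)).const_mul _)
  have swap := MeasureTheory.integral_integral_swap
    (f := fun x v : ℝ => v ^ (s - 1) * Real.exp (-(1 + v) * x)) key
  have lhs_eq : (∫ x in Ioi (0:ℝ), ∫ v in Ioi (0:ℝ), v ^ (s - 1) * Real.exp (-(1 + v) * x))
      = Real.Gamma s * Real.Gamma (1 - s) := by
    rw [setIntegral_congr_fun (measurableSet_Ioi : MeasurableSet (Ioi (0:ℝ)))
      (g := fun x => Real.Gamma s * (Real.exp (-x) * x ^ ((1 - s) - 1)))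
      (fun x hx => inner_rpow_exp h0 (mem_Ioi.mp hx))]
    rw [integral_const_mul, ← Real.Gamma_eq_integral (by linarith : (0:ℝ) < 1 - s)]
  have rhs_eq : (∫ v in Ioi (0:ℝ), ∫ x in Ioi (0:ℝ), v ^ (s - 1) * Real.exp (-(1 + v) * x))
      = ∫ t in Ioi 0, t ^ (s - 1) / (1 + t) := by
    apply setIntegral_congr_fun (measurableSet_Ioi : MeasurableSet (Ioi (0:ℝ)))
    intro v hv
    have hv0 : (0:ℝ) < v := hv
    have hb : (0:ℝ) < 1 + v := by linarith
    dsimp only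
    rw [integral_const_mul, show (fun x : ℝ => Real.exp (-(1 + v) * x)) =
      fun x : ℝ => Real.exp (-((1 + v) * x)) by simp only [neg_mul],
      inner_exp_integral hb, div_eq_mul_inv]
  rw [← rhs_eq, ← swap, lhs_eq]

lemma contOn_K {s lam : ℝ} (hlam : 0 < lam) :
    ContinuousOn (fun t : ℝ => t ^ (s - 1) / (t ^ 2 + lam ^ 2)) (Ioi 0) := by
  apply ContinuousOn.div
  · exact continuousOn_id.rpow_const fun x hx => Or.inl (ne_of_gt hx)
  · exact ((continuous_id.pow 2).add continuous_const).continuousOn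
  · intro x hx; positivity

lemma integrableOn_K {s lam : ℝ} (h0 : 0 < s) (h2 : s < 2) (hlam : 0 < lam) :
    IntegrableOn (fun t : ℝ => t ^ (s - 1) / (t ^ 2 + lam ^ 2)) (Ioi 0) := by
  rw [← Ioc_union_Ioi_eq_Ioi (zero_le_one : (0:ℝ) ≤ 1), integrableOn_union]
  constructor
  · have hint : IntegrableOn (fun t : ℝ => t ^ (s - 1) * (lam ^ 2)⁻¹) (Ioc 0 1) := by
      apply Integrable.mul_const
      have := intervalIntegral.intervalIntegrable_rpow' (a := 0) (b := 1)
        (r := s - 1) (by linarith)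
      have h' : IntegrableOn (fun x : ℝ => x ^ (s - 1)) (Ioc 0 1) := by
        simpa [intervalIntegrable_iff, uIoc_of_le (zero_le_one : (0:ℝ) ≤ 1)] using this
      exact h'
    refine hint.mono' ?_ ?_
    · exact ((contOn_K hlam).mono Ioc_subset_Ioi_self).aestronglyMeasurable measurableSet_Ioc
    · filter_upwards [self_mem_ae_restrict (measurableSet_Ioc : MeasurableSet (Ioc (0:ℝ) 1))]
        with t ht
      have ht0 : 0 < t := ht.1
      have hd : (0:ℝ) < t ^ 2 + lam ^ 2 := by positivity
      rw [norm_div, Real.norm_rpow_of_nonneg ht0.le, Real.norm_of_nonneg ht0.le,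
        Real.norm_of_nonneg hd.le, div_eq_mul_inv]
      apply mul_le_mul_of_nonneg_left _ (rpow_nonneg ht0.le _)
      apply inv_anti₀ (by positivity)
      nlinarith
  · have hint : IntegrableOn (fun t : ℝ => t ^ (s - 3)) (Ioi 1) :=
      integrableOn_Ioi_rpow_of_lt (by linarith) one_pos
    refine hint.mono' ?_ ?_
    · exact ((contOn_K hlam).mono (Ioi_subset_Ioi zero_le_one)).aestronglyMeasurable
        measurableSet_Ioi
    · filter_upwards [self_mem_ae_restrict (measurableSet_Ioi : MeasurableSet (Ioi (1:ℝ)))]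
        with t ht
      have ht1 : (1:ℝ) < t := ht
      have ht0 : (0:ℝ) < t := by linarith
      have hd : (0:ℝ) < t ^ 2 + lam ^ 2 := by positivity
      rw [norm_div, Real.norm_rpow_of_nonneg ht0.le, Real.norm_of_nonneg ht0.le,
        Real.norm_of_nonneg hd.le]
      have h3 : t ^ (s - 3) = t ^ (s - 1) / t ^ 2 := by
        rw [eq_div_iff (by positivity), ← Real.rpow_natCast t 2, ← Real.rpow_add ht0]
        norm_num
        congr 1
        ring
      rw [h3]
      apply div_le_div_of_nonneg_left (rpow_nonneg ht0.le _) (by positivity)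
      nlinarith

lemma K_value {s lam : ℝ} (h0 : 0 < s) (h2 : s < 2) (hlam : 0 < lam) :
    ∫ t in Ioi 0, t ^ (s - 1) / (t ^ 2 + lam ^ 2)
      = lam ^ (s - 2) * (Real.Gamma (s / 2) * Real.Gamma (1 - s / 2)) / 2 := by
  -- step 1 : scaling t = lam * u
  have step1 : ∫ t in Ioi 0, t ^ (s - 1) / (t ^ 2 + lam ^ 2)
      = lam ^ (s - 2) * ∫ u in Ioi (0:ℝ), u ^ (s - 1) / (u ^ 2 + 1) := by
    have := integral_comp_mul_left_Ioi
      (fun t : ℝ => t ^ (s - 1) / (t ^ 2 + lam ^ 2)) 0 hlam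
    rw [mul_zero] at this
    have heq : ∀ u ∈ Ioi (0:ℝ),
        (lam * u) ^ (s - 1) / ((lam * u) ^ 2 + lam ^ 2)
        = lam ^ (s - 3) * (u ^ (s - 1) / (u ^ 2 + 1)) := by
      intro u hu
      have hu0 : (0:ℝ) < u := hu
      rw [Real.mul_rpow hlam.le hu0.le]
      have hden : (lam * u) ^ 2 + lam ^ 2 = lam ^ 2 * (u ^ 2 + 1) := by ring
      rw [hden]
      have h3 : lam ^ (s - 3) = lam ^ (s - 1) / lam ^ 2 := by
        rw [eq_div_iff (by positivity), ← Real.rpow_natCast lam 2, ← Real.rpow_add hlam]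
        norm_num
        congr 1
        ring
      rw [h3]
      field_simp
    rw [setIntegral_congr_fun measurableSet_Ioi heq, integral_const_mul] at this
    simp only [smul_eq_mul] at this
    have hx : (∫ t in Ioi (0:ℝ), t ^ (s - 1) / (t ^ 2 + lam ^ 2))
        = lam * (lam ^ (s - 3) * ∫ u in Ioi (0:ℝ), u ^ (s - 1) / (u ^ 2 + 1)) := by
      rw [this, ← mul_assoc, mul_inv_cancel₀ hlam.ne', one_mul]
    rw [hx, ← mul_assoc]
    congr 1
    rw [show s - 2 = 1 + (s - 3) by ring, Real.rpow_add hlam, Real.rpow_one]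
  -- step 2 : u ^ 2 = v
  have step2 : ∫ u in Ioi (0:ℝ), u ^ (s - 1) / (u ^ 2 + 1)
      = (1 / 2) * (Real.Gamma (s / 2) * Real.Gamma (1 - s / 2)) := by
    have hsub := integral_comp_rpow_Ioi_of_pos
      (g := fun y : ℝ => (1 / 2) * (y ^ (s / 2 - 1) / (1 + y))) (p := 2) two_pos
    have heq : ∀ x ∈ Ioi (0:ℝ),
        ((2:ℝ) * x ^ ((2:ℝ) - 1)) • ((1 / 2) * ((x ^ (2:ℝ)) ^ (s / 2 - 1) / (1 + x ^ (2:ℝ))))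
        = x ^ (s - 1) / (x ^ 2 + 1) := by
      intro x hx
      have hx0 : (0:ℝ) < x := hx
      rw [smul_eq_mul, ← Real.rpow_natCast x 2, ← Real.rpow_mul hx0.le]
      rw [show (2:ℝ) - 1 = 1 by norm_num, Real.rpow_one]
      rw [show (2:ℝ) * (s / 2 - 1) = s - 2 by ring]
      field_simp
      rw [show s - 1 = 1 + (s - 2) by ring, Real.rpow_add hx0, Real.rpow_one]
      ring
    rw [setIntegral_congr_fun measurableSet_Ioi heq] at hsub
    rw [hsub, integral_const_mul]
    congr 1
    exact master_value (by linarith) (by linarith)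
  rw [step1, step2]
  ring

lemma g_eval (t lam c T : ℝ) (hlam : 0 < lam) :
    ∫ x in (0:ℝ)..T, Real.exp (-(t * x)) * Real.sin (c + lam * x)
      = ((t * Real.sin c + lam * Real.cos c)
          - Real.exp (-(t * T)) * (t * Real.sin (c + lam * T) + lam * Real.cos (c + lam * T)))
        / (t ^ 2 + lam ^ 2) := by
  have hD : (0:ℝ) < t ^ 2 + lam ^ 2 := by positivity
  set F : ℝ → ℝ := fun x => -(Real.exp (-(t * x)) *
    (t * Real.sin (c + lam * x) + lam * Real.cos (c + lam * x))) / (t ^ 2 + lam ^ 2) with hF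
  have hderiv : ∀ x ∈ Set.uIcc (0:ℝ) T,
      HasDerivAt F (Real.exp (-(t * x)) * Real.sin (c + lam * x)) x := by
    intro x _
    have h1 : HasDerivAt (fun x : ℝ => Real.exp (-(t * x))) (-t * Real.exp (-(t * x))) x := by
      have : HasDerivAt (fun x : ℝ => -(t * x)) (-t) x := by
        exact ((hasDerivAt_id x).const_mul t).neg.congr_deriv (by simp)
      simpa [mul_comm] using this.exp
    have h2 : HasDerivAt (fun x : ℝ => Real.sin (c + lam * x)) (lam * Real.cos (c + lam * x)) x := by
      have h : HasDerivAt (fun x : ℝ => c + lam * x) lam x := by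
        simpa using ((hasDerivAt_id x).const_mul lam).const_add c
      simpa [mul_comm] using h.sin
    have h3 : HasDerivAt (fun x : ℝ => Real.cos (c + lam * x))
        (-(lam * Real.sin (c + lam * x))) x := by
      have h : HasDerivAt (fun x : ℝ => c + lam * x) lam x := by
        simpa using ((hasDerivAt_id x).const_mul lam).const_add c
      simpa [mul_comm, mul_assoc] using h.cos
    have h4 : HasDerivAt (fun x : ℝ => t * Real.sin (c + lam * x) + lam * Real.cos (c + lam * x))
        (t * (lam * Real.cos (c + lam * x)) + lam * -(lam * Real.sin (c + lam * x))) x :=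
      (h2.const_mul t).add (h3.const_mul lam)
    have h5 := (h1.mul h4).neg.div_const (t ^ 2 + lam ^ 2)
    refine h5.congr_deriv ?_
    rw [div_eq_iff hD.ne']
    ring
  have hint : IntervalIntegrable (fun x : ℝ => Real.exp (-(t * x)) * Real.sin (c + lam * x))
      volume 0 T := by
    apply Continuous.intervalIntegrable
    fun_prop
  have := intervalIntegral.integral_eq_sub_of_hasDerivAt hderiv hint
  rw [this, hF]
  simp only [mul_zero, neg_zero, Real.exp_zero, add_zero, one_mul]
  field_simp
  ring

lemma bound_g (t lam c T : ℝ) (hlam : 0 < lam) (ht : 0 < t) (hT : 0 ≤ T) :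
    |(t * Real.sin c + lam * Real.cos c)
        - Real.exp (-(t * T)) * (t * Real.sin (c + lam * T) + lam * Real.cos (c + lam * T))|
      ≤ 2 * (t + lam) := by
  have h1 : ∀ a : ℝ, |t * Real.sin a + lam * Real.cos a| ≤ t + lam := by
    intro a
    calc |t * Real.sin a + lam * Real.cos a| ≤ |t * Real.sin a| + |lam * Real.cos a| :=
          abs_add_le _ _
      _ ≤ t * 1 + lam * 1 := by
          rw [abs_mul, abs_mul, abs_of_pos ht, abs_of_pos hlam]
          exact add_le_add (mul_le_mul_of_nonneg_left (Real.abs_sin_le_one _) ht.le)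
            (mul_le_mul_of_nonneg_left (Real.abs_cos_le_one _) hlam.le)
      _ = t + lam := by ring
  have he : Real.exp (-(t * T)) ≤ 1 := Real.exp_le_one_iff.mpr (by positivity |> neg_nonpos_of_nonneg)
  calc |(t * Real.sin c + lam * Real.cos c)
        - Real.exp (-(t * T)) * (t * Real.sin (c + lam * T) + lam * Real.cos (c + lam * T))|
      ≤ |t * Real.sin c + lam * Real.cos c|
        + |Real.exp (-(t * T)) * (t * Real.sin (c + lam * T) + lam * Real.cos (c + lam * T))| :=
        abs_sub _ _
    _ ≤ (t + lam) + 1 * (t + lam) := by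
        apply add_le_add (h1 c)
        rw [abs_mul, abs_of_pos (Real.exp_pos _)]
        exact mul_le_mul he (h1 _) (abs_nonneg _) zero_le_one
    _ = 2 * (t + lam) := by ring

lemma repr_lemma {β lam c T : ℝ} (h0 : 0 < β) (h1 : β < 1) (hlam : 0 < lam) (hT : 0 < T) :
    ∫ x in (0:ℝ)..T, x ^ (β - 1) * Real.sin (c + lam * x)
      = (Real.Gamma (1 - β))⁻¹ * ∫ t in Ioi (0:ℝ),
          t ^ (-β) * ∫ x in (0:ℝ)..T, Real.exp (-(t * x)) * Real.sin (c + lam * x) := by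
  have h1β : 0 < 1 - β := by linarith
  set G : ℝ → ℝ → ℝ := fun x t => t ^ (-β) * Real.exp (-(t * x)) * Real.sin (c + lam * x)
    with hG
  have hmeas : AEStronglyMeasurable (Function.uncurry G)
      ((volume.restrict (Ioc (0:ℝ) T)).prod (volume.restrict (Ioi (0:ℝ)))) := by
    apply Measurable.aestronglyMeasurable
    fun_prop
  -- t-integral of G for fixed x > 0
  have hGt : ∀ x : ℝ, 0 < x →
      (∫ t in Ioi (0:ℝ), G x t) = Real.Gamma (1 - β) * (x ^ (β - 1) * Real.sin (c + lam * x)) := by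
    intro x hx
    have : (fun t => G x t) = fun t =>
        (t ^ ((1 - β) - 1) * Real.exp (-(x * t))) * Real.sin (c + lam * x) := by
      ext t
      rw [hG]
      simp only []
      rw [show (1:ℝ) - β - 1 = -β by ring, mul_comm x t]
    rw [this, integral_mul_const, Real.integral_rpow_mul_exp_neg_mul_Ioi h1β hx]
    rw [one_div, Real.inv_rpow hx.le, ← Real.rpow_neg hx.le, show -(1-β) = β - 1 by ring]
    ring
  have hGtabs : ∀ x : ℝ, 0 < x →
      (∫ t in Ioi (0:ℝ), ‖G x t‖)
        = Real.Gamma (1 - β) * (x ^ (β - 1) * |Real.sin (c + lam * x)|) := by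
    intro x hx
    have : ∀ t ∈ Ioi (0:ℝ), ‖G x t‖ =
        (t ^ ((1 - β) - 1) * Real.exp (-(x * t))) * |Real.sin (c + lam * x)| := by
      intro t ht
      have ht0 : (0:ℝ) < t := ht
      rw [hG]
      simp only []
      rw [norm_mul, norm_mul, Real.norm_rpow_of_nonneg ht0.le, Real.norm_of_nonneg ht0.le,
        Real.norm_of_nonneg (Real.exp_nonneg _), Real.norm_eq_abs,
        show (1:ℝ) - β - 1 = -β by ring, mul_comm x t]
    rw [setIntegral_congr_fun measurableSet_Ioi this, integral_mul_const,
      Real.integral_rpow_mul_exp_neg_mul_Ioi h1β hx,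
      one_div, Real.inv_rpow hx.le, ← Real.rpow_neg hx.le, show -(1-β) = β - 1 by ring]
    ring
  have hGint : ∀ x : ℝ, 0 < x → Integrable (G x) (volume.restrict (Ioi (0:ℝ))) := by
    intro x hx
    have : (fun t => G x t) = fun t =>
        (t ^ ((1 - β) - 1) * Real.exp (-(x * t))) * Real.sin (c + lam * x) := by
      ext t
      rw [hG]; simp only []
      rw [show (1:ℝ) - β - 1 = -β by ring, mul_comm x t]
    show Integrable (fun t => G x t) _
    rw [this]
    exact (integrableOn_rpow_exp h1β hx).mul_const _
  have key : Integrable (Function.uncurry G)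
      ((volume.restrict (Ioc (0:ℝ) T)).prod (volume.restrict (Ioi (0:ℝ)))) := by
    rw [MeasureTheory.integrable_prod_iff hmeas]
    constructor
    · filter_upwards [self_mem_ae_restrict (measurableSet_Ioc : MeasurableSet (Ioc (0:ℝ) T))]
        with x hx
      exact hGint x hx.1
    · have heq : (fun x : ℝ => ∫ t in Ioi (0:ℝ), ‖G x t‖)
          =ᶠ[ae (volume.restrict (Ioc (0:ℝ) T))]
          fun x : ℝ => Real.Gamma (1 - β) * (x ^ (β - 1) * |Real.sin (c + lam * x)|) := by
        filter_upwards [self_mem_ae_restrict (measurableSet_Ioc : MeasurableSet (Ioc (0:ℝ) T))]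
          with x hx
        exact hGtabs x hx.1
      apply (integrable_congr heq).mpr
      have hrpow : IntegrableOn (fun x : ℝ => x ^ (β - 1)) (Ioc 0 T) := by
        have := intervalIntegral.intervalIntegrable_rpow' (a := 0) (b := T)
          (r := β - 1) (by linarith)
        simpa [intervalIntegrable_iff, uIoc_of_le hT.le] using this
      apply Integrable.mono' ((hrpow.const_mul (Real.Gamma (1 - β))))
      · apply Measurable.aestronglyMeasurable; fun_prop
      · filter_upwards [self_mem_ae_restrict (measurableSet_Ioc : MeasurableSet (Ioc (0:ℝ) T))]
          with x hx
        have hx0 : (0:ℝ) < x := hx.1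
        rw [Real.norm_of_nonneg (by positivity : (0:ℝ) ≤ Real.Gamma (1 - β) *
          (x ^ (β - 1) * |Real.sin (c + lam * x)|))]
        have hg := Real.Gamma_pos_of_pos h1β
        have habs : |Real.sin (c + lam * x)| ≤ 1 := Real.abs_sin_le_one _
        have hβx : x ^ (β - 1) * |Real.sin (c + lam * x)| ≤ x ^ (β - 1) * 1 :=
          mul_le_mul_of_nonneg_left habs (Real.rpow_nonneg hx0.le _)
        rw [mul_one] at hβx
        exact mul_le_mul_of_nonneg_left hβx hg.le
  have swap := MeasureTheory.integral_integral_swap (f := G) key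
  -- left side of swap equals Γ(1-β) * I(T)
  have lhs_eq : (∫ x in Ioc (0:ℝ) T, ∫ t in Ioi (0:ℝ), G x t)
      = Real.Gamma (1 - β) * ∫ x in (0:ℝ)..T, x ^ (β - 1) * Real.sin (c + lam * x) := by
    rw [intervalIntegral.integral_of_le hT.le, ← integral_const_mul]
    apply setIntegral_congr_fun measurableSet_Ioc
    intro x hx
    exact hGt x hx.1
  have rhs_eq : (∫ t in Ioi (0:ℝ), ∫ x in Ioc (0:ℝ) T, G x t)
      = ∫ t in Ioi (0:ℝ),
          t ^ (-β) * ∫ x in (0:ℝ)..T, Real.exp (-(t * x)) * Real.sin (c + lam * x) := by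
    apply setIntegral_congr_fun measurableSet_Ioi
    intro t ht
    dsimp only
    rw [intervalIntegral.integral_of_le hT.le, ← integral_const_mul]
    apply setIntegral_congr_fun measurableSet_Ioc
    intro x hx
    rw [hG]; simp only []
    ring
  rw [← rhs_eq, ← swap, lhs_eq]
  rw [← mul_assoc, inv_mul_cancel₀ (Real.Gamma_pos_of_pos h1β).ne', one_mul]

lemma bound_int {β lam : ℝ} (h0 : 0 < β) (h1 : β < 1) (hlam : 0 < lam) :
    IntegrableOn (fun t : ℝ => t ^ (-β) * (2 * (t + lam)) / (t ^ 2 + lam ^ 2)) (Ioi 0) := by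
  have hint : IntegrableOn (fun t : ℝ =>
      2 * (t ^ ((2 - β) - 1) / (t ^ 2 + lam ^ 2))
        + (2 * lam) * (t ^ ((1 - β) - 1) / (t ^ 2 + lam ^ 2))) (Ioi 0) :=
    ((integrableOn_K (by linarith) (by linarith) hlam).const_mul 2).add
      ((integrableOn_K (by linarith) (by linarith) hlam).const_mul (2 * lam))
  apply hint.congr_fun _ measurableSet_Ioi
  intro t ht
  dsimp only
  have ht0 : (0:ℝ) < t := ht
  have h2 : t ^ ((2:ℝ) - β - 1) = t * t ^ (-β) := by
    rw [show (2:ℝ) - β - 1 = 1 + -β by ring, Real.rpow_add ht0, Real.rpow_one]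
  have h3 : t ^ ((1:ℝ) - β - 1) = t ^ (-β) := by norm_num
  rw [h2, h3]
  field_simp

lemma trig_bound {t lam : ℝ} (ht : 0 ≤ t) (hlam : 0 < lam) (a : ℝ) :
    |t * Real.sin a + lam * Real.cos a| ≤ t + lam := by
  calc |t * Real.sin a + lam * Real.cos a| ≤ |t * Real.sin a| + |lam * Real.cos a| :=
        abs_add_le _ _
    _ ≤ t * 1 + lam * 1 := by
        rw [abs_mul, abs_mul, abs_of_nonneg ht, abs_of_pos hlam]
        exact add_le_add (mul_le_mul_of_nonneg_left (Real.abs_sin_le_one _) ht)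
          (mul_le_mul_of_nonneg_left (Real.abs_cos_le_one _) hlam.le)
    _ = t + lam := by ring

lemma dct_lemma {β lam c : ℝ} (h0 : 0 < β) (h1 : β < 1) (hlam : 0 < lam) :
    Tendsto (fun T : ℝ => ∫ t in Ioi (0:ℝ),
      t ^ (-β) * (((t * Real.sin c + lam * Real.cos c)
        - Real.exp (-(t * T)) * (t * Real.sin (c + lam * T) + lam * Real.cos (c + lam * T)))
        / (t ^ 2 + lam ^ 2)))
    atTop (𝓝 (∫ t in Ioi (0:ℝ),
      t ^ (-β) * ((t * Real.sin c + lam * Real.cos c) / (t ^ 2 + lam ^ 2)))) := by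
  apply MeasureTheory.tendsto_integral_filter_of_dominated_convergence
    (fun t : ℝ => t ^ (-β) * (2 * (t + lam)) / (t ^ 2 + lam ^ 2))
  · filter_upwards with T
    apply Measurable.aestronglyMeasurable
    fun_prop
  · filter_upwards [eventually_ge_atTop (0:ℝ)] with T hT
    filter_upwards [self_mem_ae_restrict (measurableSet_Ioi : MeasurableSet (Ioi (0:ℝ)))]
      with t ht
    have ht0 : (0:ℝ) < t := ht
    have hD : (0:ℝ) < t ^ 2 + lam ^ 2 := by positivity
    rw [Real.norm_eq_abs, abs_mul, abs_div, abs_of_nonneg (Real.rpow_nonneg ht0.le _),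
      abs_of_pos hD, mul_div_assoc]
    exact mul_le_mul_of_nonneg_left
      ((div_le_div_iff_of_pos_right hD).mpr (bound_g t lam c T hlam ht0 hT))
      (Real.rpow_nonneg ht0.le _)
  · exact bound_int h0 h1 hlam
  · filter_upwards [self_mem_ae_restrict (measurableSet_Ioi : MeasurableSet (Ioi (0:ℝ)))]
      with t ht
    have ht0 : (0:ℝ) < t := ht
    have hD : (0:ℝ) < t ^ 2 + lam ^ 2 := by positivity
    have hexp : Tendsto (fun T : ℝ => Real.exp (-(t * T))) atTop (𝓝 0) := by
      have hmul : Tendsto (fun T : ℝ => t * T) atTop atTop :=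
        Tendsto.const_mul_atTop ht0 tendsto_id
      exact (Real.tendsto_exp_neg_atTop_nhds_zero).comp hmul
    have hzero : Tendsto (fun T : ℝ => Real.exp (-(t * T)) *
        (t * Real.sin (c + lam * T) + lam * Real.cos (c + lam * T))) atTop (𝓝 0) := by
      refine squeeze_zero_norm (a := fun T => Real.exp (-(t * T)) * (t + lam)) (fun T => ?_) ?_
      · rw [Real.norm_eq_abs, abs_mul, abs_of_pos (Real.exp_pos _)]
        exact mul_le_mul_of_nonneg_left (trig_bound ht0.le hlam _) (Real.exp_pos _).le
      · simpa using hexp.mul_const (t + lam)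
    have := ((tendsto_const_nhds (x := (t * Real.sin c + lam * Real.cos c))).sub
      hzero).div_const (t ^ 2 + lam ^ 2) |>.const_mul (t ^ (-β))
    simpa using this

lemma lim_value {β lam c : ℝ} (h0 : 0 < β) (h1 : β < 1) (hlam : 0 < lam) :
    ∫ t in Ioi (0:ℝ), t ^ (-β) * ((t * Real.sin c + lam * Real.cos c) / (t ^ 2 + lam ^ 2))
      = Real.sin c * (∫ t in Ioi (0:ℝ), t ^ ((2 - β) - 1) / (t ^ 2 + lam ^ 2))
        + (lam * Real.cos c) * (∫ t in Ioi (0:ℝ), t ^ ((1 - β) - 1) / (t ^ 2 + lam ^ 2)) := by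
  have e1 : Real.sin c * ∫ t in Ioi (0:ℝ), t ^ ((2 - β) - 1) / (t ^ 2 + lam ^ 2)
      = ∫ t in Ioi (0:ℝ), Real.sin c * (t ^ ((2 - β) - 1) / (t ^ 2 + lam ^ 2)) :=
    (integral_const_mul _ _).symm
  have e2 : (lam * Real.cos c) * ∫ t in Ioi (0:ℝ), t ^ ((1 - β) - 1) / (t ^ 2 + lam ^ 2)
      = ∫ t in Ioi (0:ℝ), (lam * Real.cos c) * (t ^ ((1 - β) - 1) / (t ^ 2 + lam ^ 2)) :=
    (integral_const_mul _ _).symm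
  rw [e1, e2, ← integral_add
    (((integrableOn_K (by linarith) (by linarith) hlam)).const_mul _)
    (((integrableOn_K (by linarith) (by linarith) hlam)).const_mul _)]
  apply setIntegral_congr_fun measurableSet_Ioi
  intro t ht
  dsimp only
  have ht0 : (0:ℝ) < t := ht
  have h2 : t ^ ((2:ℝ) - β - 1) = t * t ^ (-β) := by
    rw [show (2:ℝ) - β - 1 = 1 + -β by ring, Real.rpow_add ht0, Real.rpow_one]
  have h3 : t ^ ((1:ℝ) - β - 1) = t ^ (-β) := by norm_num
  rw [h2, h3]
  field_simp

lemma final_algebra {β lam c : ℝ} (h0 : 0 < β) (h1 : β < 1) (hlam : 0 < lam) :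
    (Real.Gamma (1 - β))⁻¹ *
      (Real.sin c * (lam ^ ((2 - β) - 2) * (Real.Gamma ((2 - β) / 2)
          * Real.Gamma (1 - (2 - β) / 2)) / 2)
        + (lam * Real.cos c) * (lam ^ ((1 - β) - 2) * (Real.Gamma ((1 - β) / 2)
          * Real.Gamma (1 - (1 - β) / 2)) / 2))
      = Real.Gamma β * lam ^ (-β) * Real.sin (c + π * β / 2) := by
  have hS : (0:ℝ) < Real.sin (π * β / 2) := by
    apply Real.sin_pos_of_pos_of_lt_pi
    · positivity
    · have := Real.pi_pos; nlinarith
  have hC : (0:ℝ) < Real.cos (π * β / 2) := by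
    apply Real.cos_pos_of_mem_Ioo
    constructor
    · have := Real.pi_pos; nlinarith
    · have := Real.pi_pos; nlinarith
  have hG1 : (0:ℝ) < Real.Gamma (1 - β) := Real.Gamma_pos_of_pos (by linarith)
  have hsin2 : Real.sin (π * β) = 2 * Real.sin (π * β / 2) * Real.cos (π * β / 2) := by
    rw [show π * β = 2 * (π * β / 2) by ring, Real.sin_two_mul]
    ring
  have hsinpos : (0:ℝ) < Real.sin (π * β) := by rw [hsin2]; positivity
  -- reflection for β
  have hrefl : Real.Gamma β * Real.Gamma (1 - β) = π / Real.sin (π * β) :=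
    Real.Gamma_mul_Gamma_one_sub β
  -- K₁ gamma product
  have hK1 : Real.Gamma ((2 - β) / 2) * Real.Gamma (1 - (2 - β) / 2)
      = π / Real.sin (π * β / 2) := by
    have := Real.Gamma_mul_Gamma_one_sub (β / 2)
    rw [show (2 - β) / 2 = 1 - β / 2 by ring, show (1:ℝ) - (1 - β / 2) = β / 2 by ring,
      mul_comm, this, show π * (β / 2) = π * β / 2 by ring]
  have hK2 : Real.Gamma ((1 - β) / 2) * Real.Gamma (1 - (1 - β) / 2)
      = π / Real.cos (π * β / 2) := by
    have := Real.Gamma_mul_Gamma_one_sub ((1 - β) / 2)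
    rw [this, show π * ((1 - β) / 2) = π / 2 - π * β / 2 by ring, Real.sin_pi_div_two_sub]
  have hpow1 : lam ^ ((2:ℝ) - β - 2) = lam ^ (-β) := by norm_num
  have hpow2 : lam * lam ^ ((1:ℝ) - β - 2) = lam ^ (-β) := by
    rw [show (1:ℝ) - β - 2 = -β + -1 by ring, Real.rpow_add hlam, Real.rpow_neg_one]
    field_simp
  have hsinadd : Real.sin (c + π * β / 2)
      = Real.sin c * Real.cos (π * β / 2) + Real.cos c * Real.sin (π * β / 2) :=
    Real.sin_add c (π * β / 2)
  have hGβ : Real.Gamma β = π / (Real.sin (π * β) * Real.Gamma (1 - β)) := by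
    rw [eq_div_iff (by positivity)]
    calc Real.Gamma β * (Real.sin (π * β) * Real.Gamma (1 - β))
        = Real.Gamma β * Real.Gamma (1 - β) * Real.sin (π * β) := by ring
      _ = π / Real.sin (π * β) * Real.sin (π * β) := by rw [hrefl]
      _ = π := div_mul_cancel₀ _ hsinpos.ne'
  rw [hK1, hK2, hpow1, show lam * Real.cos c * (lam ^ ((1:ℝ) - β - 2) * (π / Real.cos (π * β / 2)) / 2)
      = Real.cos c * ((lam * lam ^ ((1:ℝ) - β - 2)) * (π / Real.cos (π * β / 2)) / 2) by ring,
    hpow2, hsinadd, hGβ, hsin2]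
  generalize π * β / 2 = θ at hS hC ⊢
  field_simp

theorem stmt_7 (β lam c : ℝ) (hβ : β ∈ Set.Ioo (0 : ℝ) 1) (hlam : 0 < lam) :
    (∀ T > (0 : ℝ), IntervalIntegrable
      (fun x : ℝ => x ^ (β - 1) * Real.sin (c + lam * x)) volume 0 T) ∧
    Tendsto (fun T : ℝ => ∫ x in (0 : ℝ)..T, x ^ (β - 1) * Real.sin (c + lam * x))
      atTop (nhds (Real.Gamma β * lam ^ (-β) * Real.sin (c + π * β / 2))) := by
  obtain ⟨h0, h1⟩ := hβ
  constructor
  · intro T hT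
    apply IntervalIntegrable.mono_fun
      (intervalIntegral.intervalIntegrable_rpow' (r := β - 1) (by linarith))
    · apply Measurable.aestronglyMeasurable; fun_prop
    · filter_upwards with x
      rw [norm_mul]
      exact mul_le_of_le_one_right (norm_nonneg _)
        (by rw [Real.norm_eq_abs]; exact Real.abs_sin_le_one _)
  · have hval : (Real.Gamma (1 - β))⁻¹ * (∫ t in Ioi (0:ℝ),
        t ^ (-β) * ((t * Real.sin c + lam * Real.cos c) / (t ^ 2 + lam ^ 2)))
        = Real.Gamma β * lam ^ (-β) * Real.sin (c + π * β / 2) := by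
      rw [lim_value h0 h1 hlam,
        K_value (s := 2 - β) (by linarith) (by linarith) hlam,
        K_value (s := 1 - β) (by linarith) (by linarith) hlam]
      exact final_algebra h0 h1 hlam
    rw [show nhds (Real.Gamma β * lam ^ (-β) * Real.sin (c + π * β / 2))
      = 𝓝 ((Real.Gamma (1 - β))⁻¹ * (∫ t in Ioi (0:ℝ),
        t ^ (-β) * ((t * Real.sin c + lam * Real.cos c) / (t ^ 2 + lam ^ 2)))) by rw [hval]]
    have heq : (fun T : ℝ => ∫ x in (0:ℝ)..T, x ^ (β - 1) * Real.sin (c + lam * x))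
        =ᶠ[atTop] fun T : ℝ => (Real.Gamma (1 - β))⁻¹ * ∫ t in Ioi (0:ℝ),
          t ^ (-β) * (((t * Real.sin c + lam * Real.cos c)
            - Real.exp (-(t * T)) * (t * Real.sin (c + lam * T)
              + lam * Real.cos (c + lam * T))) / (t ^ 2 + lam ^ 2)) := by
      filter_upwards [eventually_gt_atTop (0:ℝ)] with T hT
      rw [repr_lemma h0 h1 hlam hT]
      congr 1
      apply setIntegral_congr_fun measurableSet_Ioi
      intro t ht
      dsimp only
      rw [g_eval t lam c T hlam]
    exact (tendsto_congr' heq).mpr ((dct_lemma h0 h1 hlam).const_mul _)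
end

section
/- Let θ ∈ (0, π/2), a > 0 and φ ∈ ℝ, and for ξ ≥ 0 set K(ξ) = ∫₀^∞ z^{a-1} e^{-cos θ (ξ/z + z)} cos((ξ/z) sin θ + φ) sin(z sin θ) dz. Then K is differentiable on (0, ∞) (with derivative obtained by differentiating under the integral sign) and |K′(ξ)| ≤ 2 sin θ · (cos θ)^{-a} · Γ(a) for every ξ > 0. -/
open MeasureTheory Real

theorem stmt_9 (θ a φ : ℝ) (hθ : θ ∈ Set.Ioo (0 : ℝ) (π / 2)) (ha : 0 < a) :
    ∀ ξ > (0 : ℝ),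
      HasDerivAt (fun ζ : ℝ => ∫ z in Set.Ioi (0 : ℝ), z ^ (a - 1) *
          Real.exp (-Real.cos θ * (ζ / z + z)) * Real.cos (ζ / z * Real.sin θ + φ) *
          Real.sin (z * Real.sin θ))
        (∫ z in Set.Ioi (0 : ℝ), z ^ (a - 1) * Real.exp (-Real.cos θ * (ξ / z + z)) *
          (-(Real.cos θ / z) * Real.cos (ξ / z * Real.sin θ + φ) -
            Real.sin θ / z * Real.sin (ξ / z * Real.sin θ + φ)) *
          Real.sin (z * Real.sin θ)) ξ ∧
      |∫ z in Set.Ioi (0 : ℝ), z ^ (a - 1) * Real.exp (-Real.cos θ * (ξ / z + z)) *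
          (-(Real.cos θ / z) * Real.cos (ξ / z * Real.sin θ + φ) -
            Real.sin θ / z * Real.sin (ξ / z * Real.sin θ + φ)) *
          Real.sin (z * Real.sin θ)| ≤
        2 * Real.sin θ * Real.cos θ ^ (-a) * Real.Gamma a := by
  obtain ⟨hθ0, hθ2⟩ := hθ
  have hpi := Real.pi_pos
  have hcos : 0 < Real.cos θ := Real.cos_pos_of_mem_Ioo ⟨by linarith, hθ2⟩
  have hsin : 0 < Real.sin θ := Real.sin_pos_of_pos_of_lt_pi hθ0 (by linarith)
  have hcos1 : Real.cos θ ≤ 1 := Real.cos_le_one θ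
  have hsin1 : Real.sin θ ≤ 1 := Real.sin_le_one θ
  intro ξ hξ
  set F : ℝ → ℝ → ℝ := fun ζ z => z ^ (a - 1) *
      Real.exp (-Real.cos θ * (ζ / z + z)) * Real.cos (ζ / z * Real.sin θ + φ) *
      Real.sin (z * Real.sin θ) with hF
  set F' : ℝ → ℝ → ℝ := fun ζ z => z ^ (a - 1) * Real.exp (-Real.cos θ * (ζ / z + z)) *
          (-(Real.cos θ / z) * Real.cos (ζ / z * Real.sin θ + φ) -
            Real.sin θ / z * Real.sin (ζ / z * Real.sin θ + φ)) *
          Real.sin (z * Real.sin θ) with hF'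
  set bound : ℝ → ℝ := fun z => 2 * Real.sin θ * (z ^ (a - 1) * Real.exp (-(Real.cos θ * z)))
    with hbound
  -- integral of the bound
  have hint : ∫ z in Set.Ioi (0:ℝ), bound z = 2 * Real.sin θ * Real.cos θ ^ (-a) * Real.Gamma a := by
    rw [hbound]
    rw [MeasureTheory.integral_const_mul]
    rw [Real.integral_rpow_mul_exp_neg_mul_Ioi ha hcos]
    rw [Real.rpow_neg hcos.le, one_div, Real.inv_rpow hcos.le]
    ring
  have hbound_int : IntegrableOn bound (Set.Ioi (0:ℝ)) := by
    apply Integrable.const_mul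
    have h := integrableOn_rpow_mul_exp_neg_mul_rpow (p := 1) (s := a - 1) (b := Real.cos θ)
      (by linarith) one_pos hcos
    apply h.congr_fun ?_ measurableSet_Ioi
    intro x hx
    simp [Real.rpow_one, neg_mul]
  -- pointwise bound valid for z > 0 and ζ ≥ 0
  have key : ∀ z > (0:ℝ), ∀ ζ ≥ (0:ℝ), |F' ζ z| ≤ bound z := by
    intro z hz ζ hζ
    have hz' : (0:ℝ) < z := hz
    have hpow : (0:ℝ) < z ^ (a-1) := Real.rpow_pos_of_pos hz _
    have e1 : Real.exp (-Real.cos θ * (ζ / z + z)) ≤ Real.exp (-(Real.cos θ * z)) := by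
      apply Real.exp_le_exp.2
      have : 0 ≤ Real.cos θ * (ζ / z) := by positivity
      nlinarith
    have e2 : |-(Real.cos θ / z) * Real.cos (ζ / z * Real.sin θ + φ) -
        Real.sin θ / z * Real.sin (ζ / z * Real.sin θ + φ)| ≤ 2 / z := by
      have h1 : |(-(Real.cos θ / z)) * Real.cos (ζ / z * Real.sin θ + φ)| ≤ Real.cos θ / z := by
        rw [abs_mul, abs_neg, abs_of_nonneg (by positivity : (0:ℝ) ≤ Real.cos θ / z)]
        calc Real.cos θ / z * |Real.cos (ζ / z * Real.sin θ + φ)| ≤ Real.cos θ / z * 1 := by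
              gcongr; exact Real.abs_cos_le_one _
          _ = Real.cos θ / z := mul_one _
      have h2 : |Real.sin θ / z * Real.sin (ζ / z * Real.sin θ + φ)| ≤ Real.sin θ / z := by
        rw [abs_mul, abs_of_nonneg (by positivity : (0:ℝ) ≤ Real.sin θ / z)]
        calc Real.sin θ / z * |Real.sin (ζ / z * Real.sin θ + φ)| ≤ Real.sin θ / z * 1 := by
              gcongr; exact Real.abs_sin_le_one _
          _ = Real.sin θ / z := mul_one _
      calc |(-(Real.cos θ / z)) * Real.cos (ζ / z * Real.sin θ + φ) -
          Real.sin θ / z * Real.sin (ζ / z * Real.sin θ + φ)|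
          ≤ |(-(Real.cos θ / z)) * Real.cos (ζ / z * Real.sin θ + φ)| +
            |Real.sin θ / z * Real.sin (ζ / z * Real.sin θ + φ)| := abs_sub _ _
        _ ≤ Real.cos θ / z + Real.sin θ / z := add_le_add h1 h2
        _ ≤ 2 / z := by rw [← add_div]; gcongr; linarith
    have e3 : |Real.sin (z * Real.sin θ)| ≤ z * Real.sin θ := by
      calc |Real.sin (z * Real.sin θ)| ≤ |z * Real.sin θ| := Real.abs_sin_le_abs
        _ = z * Real.sin θ := abs_of_nonneg (by positivity)
    have : |F' ζ z| = z ^ (a-1) * Real.exp (-Real.cos θ * (ζ / z + z)) *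
        |(-(Real.cos θ / z)) * Real.cos (ζ / z * Real.sin θ + φ) -
          Real.sin θ / z * Real.sin (ζ / z * Real.sin θ + φ)| * |Real.sin (z * Real.sin θ)| := by
      rw [hF']
      simp only [abs_mul]
      rw [abs_of_nonneg hpow.le, abs_of_nonneg (Real.exp_pos _).le]
    rw [this]
    calc z ^ (a-1) * Real.exp (-Real.cos θ * (ζ / z + z)) * |_| * |_|
        ≤ z ^ (a-1) * Real.exp (-(Real.cos θ * z)) * (2 / z) * (z * Real.sin θ) := by
          gcongr <;> first | exact e1 | exact e2 | exact e3 | positivity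
      _ = bound z := by rw [hbound]; field_simp
  -- measurability
  have hmeasF : ∀ ζ : ℝ, AEStronglyMeasurable (F ζ) (volume.restrict (Set.Ioi 0)) := by
    intro ζ
    apply Measurable.aestronglyMeasurable
    fun_prop
  have hmeasF' : AEStronglyMeasurable (F' ξ) (volume.restrict (Set.Ioi 0)) := by
    apply Measurable.aestronglyMeasurable
    fun_prop
  -- integrability of F ξ
  have hg_int : IntegrableOn (fun z : ℝ => z ^ (a - 1) * Real.exp (-(Real.cos θ * z)))
      (Set.Ioi (0:ℝ)) := by
    have h := integrableOn_rpow_mul_exp_neg_mul_rpow (p := 1) (s := a - 1) (b := Real.cos θ)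
      (by linarith) one_pos hcos
    apply h.congr_fun ?_ measurableSet_Ioi
    intro x hx
    simp [Real.rpow_one, neg_mul]
  have hF_int : Integrable (F ξ) (volume.restrict (Set.Ioi (0:ℝ))) := by
    apply Integrable.mono' hg_int (hmeasF ξ)
    rw [ae_restrict_iff' measurableSet_Ioi]
    filter_upwards with z hz
    have hz' : (0:ℝ) < z := hz
    have hpow : (0:ℝ) < z ^ (a-1) := Real.rpow_pos_of_pos hz' _
    have e1 : Real.exp (-Real.cos θ * (ξ / z + z)) ≤ Real.exp (-(Real.cos θ * z)) := by
      apply Real.exp_le_exp.2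
      have : 0 ≤ Real.cos θ * (ξ / z) := by positivity
      nlinarith
    rw [hF, Real.norm_eq_abs]
    simp only [abs_mul]
    rw [abs_of_nonneg hpow.le, abs_of_nonneg (Real.exp_pos _).le]
    calc z ^ (a-1) * Real.exp (-Real.cos θ * (ξ / z + z)) * |Real.cos (ξ / z * Real.sin θ + φ)| *
          |Real.sin (z * Real.sin θ)|
        ≤ z ^ (a-1) * Real.exp (-(Real.cos θ * z)) * 1 * 1 := by
          gcongr <;> first | exact e1 | exact Real.abs_cos_le_one _ | exact Real.abs_sin_le_one _ | positivity
      _ = z ^ (a-1) * Real.exp (-(Real.cos θ * z)) := by ring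
  -- the bound in the ball
  have h_bound : ∀ᵐ z ∂(volume.restrict (Set.Ioi (0:ℝ))), ∀ x ∈ Metric.ball ξ ξ,
      ‖F' x z‖ ≤ bound z := by
    rw [ae_restrict_iff' measurableSet_Ioi]
    filter_upwards with z hz
    intro x hx
    rw [Real.norm_eq_abs]
    apply key z hz x
    have := abs_lt.1 (mem_ball_iff_norm.1 hx)
    linarith [this.1]
  -- differentiability
  have h_diff : ∀ᵐ z ∂(volume.restrict (Set.Ioi (0:ℝ))), ∀ x ∈ Metric.ball ξ ξ,
      HasDerivAt (fun ζ => F ζ z) (F' x z) x := by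
    rw [ae_restrict_iff' measurableSet_Ioi]
    filter_upwards with z hz
    intro x hx
    have hz' : (0:ℝ) < z := hz
    have hzne : z ≠ 0 := ne_of_gt hz'
    have d1 : HasDerivAt (fun ζ : ℝ => -Real.cos θ * (ζ / z + z)) (-Real.cos θ * (1 / z)) x :=
      (((hasDerivAt_id x).div_const z).add_const z).const_mul _
    have d2 : HasDerivAt (fun ζ : ℝ => ζ / z * Real.sin θ + φ) (1 / z * Real.sin θ) x :=
      (((hasDerivAt_id x).div_const z).mul_const _).add_const φ
    have := (((d1.exp.const_mul (z ^ (a-1))).mul d2.cos).mul_const (Real.sin (z * Real.sin θ)))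
    refine this.congr_deriv ?_
    rw [hF']
    ring
  have main := hasDerivAt_integral_of_dominated_loc_of_deriv_le (Metric.ball_mem_nhds ξ hξ)
    (Filter.Eventually.of_forall hmeasF) hF_int hmeasF' h_bound hbound_int h_diff
  refine ⟨main.2, ?_⟩
  calc |∫ z in Set.Ioi (0:ℝ), F' ξ z| = ‖∫ z in Set.Ioi (0:ℝ), F' ξ z‖ :=
        (Real.norm_eq_abs _).symm
    _ ≤ ∫ z in Set.Ioi (0:ℝ), bound z := by
        apply norm_integral_le_of_norm_le hbound_int
        rw [ae_restrict_iff' measurableSet_Ioi]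
        filter_upwards with z hz
        rw [Real.norm_eq_abs]
        exact key z hz ξ hξ.le
    _ = 2 * Real.sin θ * Real.cos θ ^ (-a) * Real.Gamma a := hint
end
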